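/- (Incomplete-market optimality, abstract form) Let 𝒬 be a nonempty set of probability measures, H ≥ 0, c ≥ 0 a constant, and x₀ ≥ 0. Suppose à is measurable with sup_{Q∈𝒬} E^Q[1_Ã(H-c)⁺] ≤ x₀ and P(Ã) ≥ P(A) for every measurable A with sup_{Q∈𝒬} E^Q[1_A(H-c)⁺] ≤ x₀. Let X be any nonnegative random variable with sup_{Q∈𝒬} E^Q[X] ≤ x₀. Then P((H - X)⁺ ≤ c) ≤ P(Ã); moreover, if Y is a nonnegative random variable with Y ≥ 1_Ã(H-c)⁺ pointwise, then P((H - Y)⁺ ≤ c) ≥ P(Ã). -/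
import Mathlib


open MeasureTheory

theorem incomplete_market_optimality
    {Ω : Type*} [MeasurableSpace Ω]
    (P : Measure Ω) [IsProbabilityMeasure P]
    (𝒬 : Set (Measure Ω)) (h𝒬ne : 𝒬.Nonempty)
    (h𝒬prob : ∀ Q ∈ 𝒬, IsProbabilityMeasure Q)
    (H : Ω → ℝ) (hHm : Measurable H) (hH0 : ∀ ω, 0 ≤ H ω)
    (hHint : ∀ Q ∈ 𝒬, Integrable H Q)
    (c x₀ : ℝ) (hc : 0 ≤ c) (hx₀ : 0 ≤ x₀)
    (Atil : Set Ω) (hAtilm : MeasurableSet Atil)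
    (hAtilc : ∀ Q ∈ 𝒬, ∫ ω, Set.indicator Atil (fun ω => max (H ω - c) 0) ω ∂Q ≤ x₀)
    (hmax : ∀ A : Set Ω, MeasurableSet A →
      (∀ Q ∈ 𝒬, ∫ ω, Set.indicator A (fun ω => max (H ω - c) 0) ω ∂Q ≤ x₀) →
      P A ≤ P Atil)
    (X : Ω → ℝ) (hXm : Measurable X) (hX0 : ∀ ω, 0 ≤ X ω)
    (hXint : ∀ Q ∈ 𝒬, Integrable X Q)
    (hXc : ∀ Q ∈ 𝒬, ∫ ω, X ω ∂Q ≤ x₀) :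
    P {ω | max (H ω - X ω) 0 ≤ c} ≤ P Atil ∧
    (∀ Y : Ω → ℝ, (∀ ω, 0 ≤ Y ω) →
      (∀ ω, Set.indicator Atil (fun ω => max (H ω - c) 0) ω ≤ Y ω) →
      P Atil ≤ P {ω | max (H ω - Y ω) 0 ≤ c}) := by
  constructor
  · set A : Set Ω := {ω | max (H ω - X ω) 0 ≤ c} with hA
    have hAm : MeasurableSet A := by
      apply measurableSet_le (by measurability) measurable_const
    apply hmax A hAm
    intro Q hQ
    refine le_trans ?_ (hXc Q hQ)
    have hle : ∀ ω, Set.indicator A (fun ω => max (H ω - c) 0) ω ≤ X ω := by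
      intro ω
      by_cases hω : ω ∈ A
      · simp only [Set.indicator_of_mem hω]
        have h1 : H ω - X ω ≤ c := le_trans (le_max_left _ _) hω
        exact max_le (by linarith) (hX0 ω)
      · simp [Set.indicator_of_notMem hω, hX0 ω]
    apply integral_mono_of_nonneg
    · filter_upwards with ω
      exact Set.indicator_nonneg (fun ω _ => le_max_right _ _) ω
    · exact hXint Q hQ
    · filter_upwards with ω using hle ω
  · intro Y hY0 hYge
    apply measure_mono
    intro ω hω
    have := hYge ω
    rw [Set.indicator_of_mem hω] at this
    have h1 : H ω - c ≤ Y ω := le_trans (le_max_left _ _) this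
    exact max_le (by linarith) hc
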